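/- Let T = 2 and for M ∈ ℕ let Q_M be the probability measure on [0,1]² with density g(x_1,x_2) = M Σ_{i=0}^{M−1} 1_{[i/M,(i+1)/M)²}(x_1,x_2) with respect to Lebesgue measure. Then both marginals of Q_M are Lebesgue measure on [0,1], E_{Q_M}[S_2 | S_1 = x] = (2i+1)/(2M) for x ∈ [i/M,(i+1)/M), and E_{Q_M}[ |E_{Q_M}[S_2|S_1] − S_1| ] = 1/(4M). -/

import Mathlib

open MeasureTheory Filter Topology

noncomputable def densityg (M : ℕ) (x : ℝ × ℝ) : ℝ :=
  M * ∑ i ∈ Finset.range M,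
    Set.indicator
      (Set.Ico ((i : ℝ) / M) ((i + 1 : ℕ) / M) ×ˢ Set.Ico ((i : ℝ) / M) ((i + 1 : ℕ) / M))
      (fun _ => (1 : ℝ)) x

noncomputable def QM (M : ℕ) : Measure (ℝ × ℝ) :=
  (volume : Measure (ℝ × ℝ)).withDensity (fun x => ENNReal.ofReal (densityg M x))

namespace Stmt16

noncomputable section

def II (M i : ℕ) : Set ℝ := Set.Ico ((i : ℝ) / M) ((i + 1 : ℕ) / M)

def nu (M i : ℕ) : Measure (ℝ × ℝ) :=
  ((volume : Measure ℝ).restrict (II M i)).prod ((volume : Measure ℝ).restrict (II M i))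

def ff (M : ℕ) (u : ℝ) : ℝ :=
  ∑ i ∈ Finset.range M, Set.indicator (II M i) (fun _ => (2 * i + 1 : ℝ) / (2 * M)) u

end

variable {M : ℕ}

lemma II_def (i : ℕ) : II M i = Set.Ico ((i : ℝ) / M) (((i : ℝ) + 1) / M) := by
  simp [II]

lemma measurableSet_II (i : ℕ) : MeasurableSet (II M i) := measurableSet_Ico

lemma volume_II (i : ℕ) : (volume : Measure ℝ) (II M i) = ENNReal.ofReal (1 / M) := by
  rw [II_def, Real.volume_Ico]
  congr 1
  rw [div_sub_div_same]
  norm_num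

lemma hMR (hM : 0 < M) : (0 : ℝ) < M := by exact_mod_cast hM

lemma disjoint_II {i j : ℕ} (hM : 0 < M) (h : i ≠ j) : Disjoint (II M i) (II M j) := by
  rw [II_def, II_def, Set.Ico_disjoint_Ico]
  rcases h.lt_or_gt with hij | hij
  · refine le_trans (min_le_left _ _) (le_trans ?_ (le_max_right _ _))
    have : ((i : ℝ) + 1) ≤ j := by exact_mod_cast Nat.succ_le_of_lt hij
    exact div_le_div_of_nonneg_right this (hMR hM).le
  · refine le_trans (min_le_right _ _) (le_trans ?_ (le_max_left _ _))
    have : ((j : ℝ) + 1) ≤ i := by exact_mod_cast Nat.succ_le_of_lt hij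
    exact div_le_div_of_nonneg_right this (hMR hM).le

lemma iUnion_II (hM : 0 < M) : ⋃ i ∈ Finset.range M, II M i = Set.Ico (0 : ℝ) 1 := by
  have hM0 := hMR hM
  ext x
  simp only [Set.mem_iUnion, Finset.mem_range, II_def, Set.mem_Ico, exists_prop]
  constructor
  · rintro ⟨i, hiM, h1, h2⟩
    refine ⟨le_trans (by positivity) h1, lt_of_lt_of_le h2 ?_⟩
    rw [div_le_one hM0]
    exact_mod_cast Nat.succ_le_of_lt hiM
  · rintro ⟨h0, h1⟩
    have hxM : 0 ≤ x * M := by positivity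
    refine ⟨⌊x * M⌋₊, ?_, ?_, ?_⟩
    · exact (Nat.floor_lt hxM).mpr (by nlinarith)
    · rw [div_le_iff₀ hM0]
      exact Nat.floor_le hxM
    · rw [lt_div_iff₀ hM0]
      exact_mod_cast Nat.lt_floor_add_one (x * M)

lemma withDensity_finset_sum {α : Type*} {m : MeasurableSpace α} (μ : Measure α) {ι : Type*}
    (s : Finset ι) {f : ι → α → ENNReal} (hf : ∀ i, Measurable (f i)) :
    μ.withDensity (∑ i ∈ s, f i) = ∑ i ∈ s, μ.withDensity (f i) := by
  classical
  induction s using Finset.induction_on with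
  | empty => simp
  | insert _ _ h ih =>
    rw [Finset.sum_insert h, Finset.sum_insert h, withDensity_add_left (hf _), ih]

lemma QM_eq : QM M = ∑ i ∈ Finset.range M, (M : ENNReal) • nu M i := by
  have hmeas : ∀ i : ℕ, Measurable ((M : ENNReal) •
      Set.indicator (II M i ×ˢ II M i) (fun _ => (1 : ENNReal))) := fun i =>
    (measurable_const.indicator ((measurableSet_II i).prod (measurableSet_II i))).const_smul _
  have hden : (fun x => ENNReal.ofReal (densityg M x)) =
      ∑ i ∈ Finset.range M, (M : ENNReal) •
        Set.indicator (II M i ×ˢ II M i) (fun _ => (1 : ENNReal)) := by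
    funext x
    rw [densityg, ENNReal.ofReal_mul (Nat.cast_nonneg M),
      ENNReal.ofReal_sum_of_nonneg (fun i _ => Set.indicator_nonneg (fun _ _ => zero_le_one) _),
      ENNReal.ofReal_natCast, Finset.sum_apply, Finset.mul_sum]
    refine Finset.sum_congr rfl fun i _ => ?_
    rw [Pi.smul_apply, smul_eq_mul]
    congr 1
    by_cases hx : x ∈ II M i ×ˢ II M i
    · rw [Set.indicator_of_mem (by exact hx), Set.indicator_of_mem hx, ENNReal.ofReal_one]
    · rw [Set.indicator_of_notMem (by exact hx), Set.indicator_of_notMem hx, ENNReal.ofReal_zero]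
  rw [QM, hden, withDensity_finset_sum _ _ hmeas]
  refine Finset.sum_congr rfl fun i _ => ?_
  rw [withDensity_smul _ (measurable_const.indicator ((measurableSet_II i).prod (measurableSet_II i)))]
  congr 1
  rw [show (Set.indicator (II M i ×ˢ II M i) (fun _ => (1:ENNReal))) =
    Set.indicator (II M i ×ˢ II M i) 1 from rfl,
    withDensity_indicator_one ((measurableSet_II i).prod (measurableSet_II i)), nu,
    Measure.volume_eq_prod, Measure.prod_restrict]

lemma nu_univ (i : ℕ) : nu M i Set.univ = ENNReal.ofReal (1 / M) * ENNReal.ofReal (1 / M) := by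
  rw [nu, ← Set.univ_prod_univ, Measure.prod_prod, Measure.restrict_apply_univ,
    volume_II]

instance nu_finite (i : ℕ) : IsFiniteMeasure (nu M i) :=
  ⟨by rw [nu_univ]; exact ENNReal.mul_lt_top ENNReal.ofReal_lt_top ENNReal.ofReal_lt_top⟩

lemma smul_nu_univ_lt_top (i : ℕ) : ((M : ENNReal) • nu M i) Set.univ < ⊤ := by
  rw [Measure.smul_apply, smul_eq_mul]
  exact ENNReal.mul_lt_top (ENNReal.natCast_lt_top M) (measure_lt_top _ _)

instance QM_finite : IsFiniteMeasure (QM M) := by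
  constructor
  rw [QM_eq, Measure.finset_sum_apply]
  exact ENNReal.sum_lt_top.mpr fun i _ => smul_nu_univ_lt_top i

lemma restrict_finset_sum {α : Type*} {m : MeasurableSpace α} {ι : Type*} (s : Finset ι)
    (μ : ι → Measure α) (t : Set α) :
    (∑ i ∈ s, μ i).restrict t = ∑ i ∈ s, (μ i).restrict t := by
  classical
  induction s using Finset.induction_on with
  | empty => simp
  | insert _ _ h ih => rw [Finset.sum_insert h, Finset.sum_insert h, Measure.restrict_add, ih]

lemma ae_mem_U (hM : 0 < M) : ∀ᵐ x ∂(QM M), x ∈ ⋃ i ∈ Finset.range M, II M i ×ˢ II M i := by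
  set U := ⋃ i ∈ Finset.range M, II M i ×ˢ II M i with hU
  have hUmeas : MeasurableSet U :=
    MeasurableSet.biUnion (Finset.range M).countable_toSet
      (fun i _ => (measurableSet_II i).prod (measurableSet_II i))
  rw [ae_iff]
  have : {x : ℝ × ℝ | ¬x ∈ U} = Uᶜ := rfl
  rw [this, QM_eq, Measure.finset_sum_apply]
  refine Finset.sum_eq_zero fun i hi => ?_
  rw [Measure.smul_apply, smul_eq_mul]
  have : nu M i Uᶜ = 0 := by
    rw [nu, Measure.prod_restrict, Measure.restrict_apply hUmeas.compl]
    have hsub : II M i ×ˢ II M i ⊆ U := by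
      intro x hx
      exact Set.mem_biUnion hi hx
    have : Uᶜ ∩ II M i ×ˢ II M i = ∅ := by
      rw [Set.eq_empty_iff_forall_notMem]
      rintro x ⟨hxc, hx⟩
      exact hxc (hsub hx)
    rw [this]
    exact measure_empty
  rw [this, mul_zero]

lemma integrable_bdd {h : ℝ × ℝ → ℝ} {μ : Measure (ℝ × ℝ)}
    (hmeas : AEStronglyMeasurable h μ) (C : ℝ) (hC : ∀ᵐ x ∂μ, |h x| ≤ C)
    (hμ : μ Set.univ < ⊤) : Integrable h μ :=
  Integrable.mono' (integrable_const_iff.mpr (Or.inr ⟨hμ⟩)) hmeas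
    (hC.mono fun x hx => by simpa using hx)

lemma int_fst (μ₁ μ₂ : Measure ℝ) [SFinite μ₁] [SFinite μ₂] {f : ℝ → ℝ}
    (hf : AEStronglyMeasurable f μ₁) :
    ∫ x : ℝ × ℝ, f x.1 ∂(μ₁.prod μ₂) = (μ₂ Set.univ).toReal * ∫ u, f u ∂μ₁ := by
  have hf' : AEStronglyMeasurable f ((μ₁.prod μ₂).map Prod.fst) := by
    rw [Measure.map_fst_prod]
    exact hf.mono_ac Measure.smul_absolutelyContinuous
  rw [← integral_map measurable_fst.aemeasurable hf', Measure.map_fst_prod,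
    integral_smul_measure, smul_eq_mul]

lemma int_snd (μ₁ μ₂ : Measure ℝ) [SFinite μ₁] [SFinite μ₂] {f : ℝ → ℝ}
    (hf : AEStronglyMeasurable f μ₂) :
    ∫ x : ℝ × ℝ, f x.2 ∂(μ₁.prod μ₂) = (μ₁ Set.univ).toReal * ∫ u, f u ∂μ₂ := by
  have hf' : AEStronglyMeasurable f ((μ₁.prod μ₂).map Prod.snd) := by
    rw [Measure.map_snd_prod]
    exact hf.mono_ac Measure.smul_absolutelyContinuous
  rw [← integral_map measurable_snd.aemeasurable hf', Measure.map_snd_prod,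
    integral_smul_measure, smul_eq_mul]

lemma measurable_ff : Measurable (ff M) :=
  Finset.measurable_sum _ fun i _ => measurable_const.indicator (measurableSet_II i)

lemma ff_eq (hM : 0 < M) {i : ℕ} (hi : i < M) {u : ℝ} (hu : u ∈ II M i) :
    ff M u = (2 * i + 1 : ℝ) / (2 * M) := by
  rw [ff, Finset.sum_eq_single i]
  · exact Set.indicator_of_mem hu _
  · intro j hj hji
    exact Set.indicator_of_notMem
      (Set.disjoint_right.mp (disjoint_II hM hji) hu) _
  · intro h
    exact absurd (Finset.mem_range.mpr hi) h

lemma ff_bdd (hM : 0 < M) (u : ℝ) : |ff M u| ≤ M := by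
  have hM0 := hMR hM
  rw [ff]
  refine le_trans (Finset.abs_sum_le_sum_abs _ _) ?_
  calc ∑ i ∈ Finset.range M, |Set.indicator (II M i) (fun _ => (2 * i + 1 : ℝ) / (2 * M)) u|
      ≤ ∑ i ∈ Finset.range M, 1 := by
        refine Finset.sum_le_sum fun i hi => ?_
        by_cases hu : u ∈ II M i
        · rw [Set.indicator_of_mem hu]
          rw [abs_of_nonneg (by positivity)]
          rw [div_le_one (by positivity : (0:ℝ) < 2 * M)]
          have : (i : ℝ) + 1 ≤ M := by exact_mod_cast Nat.succ_le_of_lt (Finset.mem_range.mp hi)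
          linarith
        · rw [Set.indicator_of_notMem hu]
          simp
    _ = M := by simp

lemma integral_id_II (hM : 0 < M) (i : ℕ) :
    ∫ u in II M i, u = (2 * i + 1 : ℝ) / (2 * M ^ 2) := by
  have hM0 := hMR hM
  have hab : (i : ℝ) / M ≤ ((i : ℝ) + 1) / M :=
    div_le_div_of_nonneg_right (by linarith) hM0.le
  rw [II_def, setIntegral_congr_set Ico_ae_eq_Ioc, ← intervalIntegral.integral_of_le hab,
    integral_id]
  field_simp
  ring

lemma vol_II_toReal (i : ℕ) : ((volume : Measure ℝ) (II M i)).toReal = 1 / M := by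
  rw [volume_II, ENNReal.toReal_ofReal (by positivity)]

lemma nu_restrict (i : ℕ) {t : Set ℝ} (ht : MeasurableSet t) :
    (nu M i).restrict (Prod.fst ⁻¹' t) =
      ((volume : Measure ℝ).restrict (t ∩ II M i)).prod
        ((volume : Measure ℝ).restrict (II M i)) := by
  rw [nu, Measure.prod_restrict, ← Set.prod_univ,
    Measure.restrict_restrict (ht.prod MeasurableSet.univ), Set.prod_inter_prod,
    Set.univ_inter, ← Measure.prod_restrict]

lemma setIntegral_ff (hM : 0 < M) {i : ℕ} (hi : i < M) {t : Set ℝ} (ht : MeasurableSet t) :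
    ∫ x in Prod.fst ⁻¹' t, ff M x.1 ∂(nu M i) =
      (1 / M) * ((volume (t ∩ II M i)).toReal * ((2 * i + 1 : ℝ) / (2 * M))) := by
  rw [nu_restrict i ht, int_fst _ _ (f := ff M) measurable_ff.aestronglyMeasurable,
    Measure.restrict_apply_univ, vol_II_toReal]
  congr 1
  rw [setIntegral_congr_fun (ht.inter (measurableSet_II i))
    (fun u hu => ff_eq hM hi hu.2), setIntegral_const, smul_eq_mul, measureReal_def]

lemma setIntegral_snd (hM : 0 < M) (i : ℕ) {t : Set ℝ} (ht : MeasurableSet t) :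
    ∫ x in Prod.fst ⁻¹' t, x.2 ∂(nu M i) =
      (volume (t ∩ II M i)).toReal * ((2 * i + 1 : ℝ) / (2 * M ^ 2)) := by
  rw [nu_restrict i ht, int_snd _ _ (f := fun u : ℝ => u) measurable_id.aestronglyMeasurable,
    Measure.restrict_apply_univ, integral_id_II hM i]

lemma abs_int (a b c : ℝ) (hac : a ≤ c) (hcb : c ≤ b) :
    ∫ u in a..b, |c - u| = (c - a) ^ 2 / 2 + (b - c) ^ 2 / 2 := by
  have hcont : Continuous fun u : ℝ => |c - u| := (continuous_const.sub continuous_id).abs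
  have h1 : IntervalIntegrable (fun u : ℝ => |c - u|) volume a c := hcont.intervalIntegrable _ _
  have h2 : IntervalIntegrable (fun u : ℝ => |c - u|) volume c b := hcont.intervalIntegrable _ _
  rw [← intervalIntegral.integral_add_adjacent_intervals h1 h2]
  have e1 : ∫ u in a..c, |c - u| = ∫ u in a..c, (c - u) := by
    refine intervalIntegral.integral_congr fun u hu => ?_
    rw [Set.uIcc_of_le hac] at hu
    exact abs_of_nonneg (by linarith [hu.2])
  have e2 : ∫ u in c..b, |c - u| = ∫ u in c..b, (u - c) := by
    refine intervalIntegral.integral_congr fun u hu => ?_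
    rw [Set.uIcc_of_le hcb] at hu
    rw [abs_sub_comm]
    exact abs_of_nonneg (by linarith [hu.1])
  rw [e1, e2,
    intervalIntegral.integral_sub (intervalIntegrable_const) intervalIntegral.intervalIntegrable_id,
    intervalIntegral.integral_sub intervalIntegral.intervalIntegrable_id (intervalIntegrable_const),
    intervalIntegral.integral_const, intervalIntegral.integral_const, integral_id, integral_id]
  simp only [smul_eq_mul]
  ring

lemma integral_absdiff_II (hM : 0 < M) {i : ℕ} (hi : i < M) :
    ∫ u in II M i, |ff M u - u| = 1 / (4 * M ^ 2) := by
  have hM0 := hMR hM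
  have key : ∀ u ∈ II M i, |ff M u - u| = |(2 * i + 1 : ℝ) / (2 * M) - u| := fun u hu => by
    rw [ff_eq hM hi hu]
  have hac : (i : ℝ) / M ≤ (2 * i + 1 : ℝ) / (2 * M) := by
    rw [div_le_div_iff₀ hM0 (by positivity)]
    ring_nf
    nlinarith [Nat.cast_nonneg (α := ℝ) i]
  have hcb : (2 * i + 1 : ℝ) / (2 * M) ≤ ((i : ℝ) + 1) / M := by
    rw [div_le_div_iff₀ (by positivity) hM0]
    nlinarith [Nat.cast_nonneg (α := ℝ) i]
  have hab : (i : ℝ) / M ≤ ((i : ℝ) + 1) / M := le_trans hac hcb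
  rw [setIntegral_congr_fun (measurableSet_II i) key, II_def,
    setIntegral_congr_set Ico_ae_eq_Ioc, ← intervalIntegral.integral_of_le hab,
    abs_int _ _ _ hac hcb]
  field_simp
  ring

lemma II_subset (hM : 0 < M) {i : ℕ} (hi : i < M) : II M i ⊆ Set.Ico (0 : ℝ) 1 := fun u hu => by
  rw [← iUnion_II hM]
  exact Set.mem_biUnion (Finset.mem_range.mpr hi) hu

lemma ae_sq (i : ℕ) : ∀ᵐ x ∂(nu M i), x ∈ II M i ×ˢ II M i := by
  rw [nu, Measure.prod_restrict]
  exact ae_restrict_mem ((measurableSet_II i).prod (measurableSet_II i))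

lemma ae_sq' (i : ℕ) {μ : Measure (ℝ × ℝ)} (hac : μ ≪ nu M i) :
    ∀ᵐ x ∂μ, x ∈ II M i ×ˢ II M i := (ae_sq i).filter_mono hac.ae_le

lemma bound_snd (hM : 0 < M) {i : ℕ} (hi : i < M) {x : ℝ × ℝ}
    (hx : x ∈ II M i ×ˢ II M i) : |x.2| ≤ 1 := by
  have h2 := II_subset hM hi hx.2
  rw [Set.mem_Ico] at h2
  rw [abs_of_nonneg h2.1]
  exact h2.2.le

lemma smul_restrict_ac (i : ℕ) (s : Set (ℝ × ℝ)) :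
    ((M : ENNReal) • nu M i).restrict s ≪ nu M i :=
  Measure.absolutelyContinuous_of_le
    (le_trans Measure.restrict_le_self (le_refl _)) |>.trans
    Measure.smul_absolutelyContinuous

lemma restrict_univ_lt_top (i : ℕ) (s : Set (ℝ × ℝ)) :
    (((M : ENNReal) • nu M i).restrict s) Set.univ < ⊤ := by
  rw [Measure.restrict_apply_univ]
  exact lt_of_le_of_lt (measure_mono (Set.subset_univ s)) (smul_nu_univ_lt_top i)

lemma condexp_eq (hM : 0 < M) :
    (fun x : ℝ × ℝ => ff M x.1) =ᵐ[QM M]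
      (QM M)[fun x : ℝ × ℝ => x.2 | MeasurableSpace.comap Prod.fst inferInstance] := by
  have hM0 := hMR hM
  have hm : MeasurableSpace.comap (Prod.fst : ℝ × ℝ → ℝ) inferInstance ≤
      (inferInstance : MeasurableSpace (ℝ × ℝ)) := measurable_fst.comap_le
  refine ae_eq_condExp_of_forall_setIntegral_eq hm ?_ ?_ ?_ ?_
  · -- Integrable snd
    refine integrable_bdd measurable_snd.aestronglyMeasurable 1 ?_ (measure_lt_top _ _)
    refine (ae_mem_U hM).mono fun x hx => ?_
    obtain ⟨i, hi, hxi⟩ := Set.mem_iUnion₂.mp hx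
    exact bound_snd hM (Finset.mem_range.mp hi) hxi
  · -- IntegrableOn g on finite sets
    intro s _ _
    exact integrable_bdd ((measurable_ff.comp measurable_fst).aestronglyMeasurable) M
      (ae_of_all _ fun x => ff_bdd hM x.1) (measure_lt_top _ _)
  · -- set integral equality
    rintro s ⟨t, ht, rfl⟩ _
    have hint1 : ∀ i ∈ Finset.range M, Integrable (fun x : ℝ × ℝ => ff M x.1)
        (((M : ENNReal) • nu M i).restrict (Prod.fst ⁻¹' t)) := fun i _ =>
      integrable_bdd ((measurable_ff.comp measurable_fst).aestronglyMeasurable) M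
        (ae_of_all _ fun x => ff_bdd hM x.1) (restrict_univ_lt_top i _)
    have hint2 : ∀ i ∈ Finset.range M, Integrable (fun x : ℝ × ℝ => x.2)
        (((M : ENNReal) • nu M i).restrict (Prod.fst ⁻¹' t)) := fun i hi =>
      integrable_bdd measurable_snd.aestronglyMeasurable 1
        ((ae_sq' i (smul_restrict_ac i _)).mono fun x hx =>
          bound_snd hM (Finset.mem_range.mp hi) hx)
        (restrict_univ_lt_top i _)
    rw [QM_eq, restrict_finset_sum, integral_finset_sum_measure hint1,
      integral_finset_sum_measure hint2]
    refine Finset.sum_congr rfl fun i hi => ?_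
    rw [Measure.restrict_smul, integral_smul_measure, integral_smul_measure,
      ENNReal.toReal_natCast, smul_eq_mul, smul_eq_mul]
    show (M : ℝ) * ∫ x in Prod.fst ⁻¹' t, ff M x.1 ∂nu M i =
      (M : ℝ) * ∫ x in Prod.fst ⁻¹' t, x.2 ∂nu M i
    rw [setIntegral_ff hM (Finset.mem_range.mp hi) ht, setIntegral_snd hM i ht]
    have hMne : (M : ℝ) ≠ 0 := hM0.ne'
    field_simp
  · -- AEStronglyMeasurable'
    refine StronglyMeasurable.aestronglyMeasurable ?_
    have h1 : Measurable[MeasurableSpace.comap (Prod.fst : ℝ × ℝ → ℝ) inferInstance]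
        (Prod.fst : ℝ × ℝ → ℝ) := measurable_iff_comap_le.mpr le_rfl
    exact (measurable_ff.comp h1).stronglyMeasurable

lemma M_mul_ofReal (hM : 0 < M) : (M : ENNReal) * ENNReal.ofReal (1 / M) = 1 := by
  rw [← ENNReal.ofReal_natCast, ← ENNReal.ofReal_mul (Nat.cast_nonneg M),
    mul_one_div_cancel (hMR hM).ne', ENNReal.ofReal_one]

lemma measure_inter_Ico_eq_Icc (s : Set ℝ) :
    (volume : Measure ℝ) (s ∩ Set.Ico 0 1) = volume (s ∩ Set.Icc 0 1) := by
  refine le_antisymm (measure_mono (Set.inter_subset_inter_right s Set.Ico_subset_Icc_self)) ?_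
  have hsub : s ∩ Set.Icc 0 1 ⊆ (s ∩ Set.Ico 0 1) ∪ {(1 : ℝ)} := by
    rintro x ⟨hxs, hx0, hx1⟩
    rcases lt_or_eq_of_le hx1 with h | h
    · exact Or.inl ⟨hxs, hx0, h⟩
    · exact Or.inr (by simp [h])
  refine le_trans (measure_mono hsub) ?_
  refine le_trans (measure_union_le _ _) ?_
  simp

lemma sum_vol_inter (hM : 0 < M) {s : Set ℝ} (hs : MeasurableSet s) :
    ∑ i ∈ Finset.range M, (volume : Measure ℝ) (s ∩ II M i) = volume (s ∩ Set.Icc 0 1) := by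
  rw [← measure_inter_Ico_eq_Icc, ← iUnion_II hM, Set.inter_iUnion₂,
    measure_biUnion_finset ?_ (fun i _ => hs.inter (measurableSet_II i))]
  intro i _ j _ hij
  exact Set.disjoint_of_subset Set.inter_subset_right Set.inter_subset_right
    (disjoint_II hM hij)

lemma map_fst_QM (hM : 0 < M) :
    (QM M).map Prod.fst = (volume : Measure ℝ).restrict (Set.Icc 0 1) := by
  refine Measure.ext fun s hs => ?_
  rw [Measure.map_apply measurable_fst hs, Measure.restrict_apply hs, QM_eq,
    Measure.finset_sum_apply, ← sum_vol_inter hM hs]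
  refine Finset.sum_congr rfl fun i _ => ?_
  rw [Measure.smul_apply, smul_eq_mul, nu, ← Set.prod_univ, Measure.prod_prod,
    Measure.restrict_apply hs, Measure.restrict_apply_univ, volume_II]
  rw [show (M : ENNReal) * (volume (s ∩ II M i) * ENNReal.ofReal (1 / M)) =
    ((M : ENNReal) * ENNReal.ofReal (1 / M)) * volume (s ∩ II M i) by ring,
    M_mul_ofReal hM, one_mul]

lemma map_snd_QM (hM : 0 < M) :
    (QM M).map Prod.snd = (volume : Measure ℝ).restrict (Set.Icc 0 1) := by
  refine Measure.ext fun s hs => ?_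
  rw [Measure.map_apply measurable_snd hs, Measure.restrict_apply hs, QM_eq,
    Measure.finset_sum_apply, ← sum_vol_inter hM hs]
  refine Finset.sum_congr rfl fun i _ => ?_
  rw [Measure.smul_apply, smul_eq_mul, nu, ← Set.univ_prod, Measure.prod_prod,
    Measure.restrict_apply hs, Measure.restrict_apply_univ, volume_II]
  rw [show (M : ENNReal) * (ENNReal.ofReal (1 / M) * volume (s ∩ II M i)) =
    ((M : ENNReal) * ENNReal.ofReal (1 / M)) * volume (s ∩ II M i) by ring,
    M_mul_ofReal hM, one_mul]

lemma bound_fst (hM : 0 < M) {i : ℕ} (hi : i < M) {x : ℝ × ℝ}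
    (hx : x ∈ II M i ×ˢ II M i) : |x.1| ≤ 1 := by
  have h2 := II_subset hM hi hx.1
  rw [Set.mem_Ico] at h2
  rw [abs_of_nonneg h2.1]
  exact h2.2.le

lemma final_integral (hM : 0 < M) :
    ∫ x : ℝ × ℝ, |ff M x.1 - x.1| ∂(QM M) = 1 / (4 * M) := by
  have hM0 := hMR hM
  have hmeas : Measurable fun u : ℝ => |ff M u - u| := (measurable_ff.sub measurable_id).abs
  have hint : ∀ i ∈ Finset.range M, Integrable (fun x : ℝ × ℝ => |ff M x.1 - x.1|)
      ((M : ENNReal) • nu M i) := by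
    intro i hi
    refine integrable_bdd (hmeas.comp measurable_fst).aestronglyMeasurable ((M : ℝ) + 1)
      ((ae_sq' i Measure.smul_absolutelyContinuous).mono fun x hx => ?_)
      (smul_nu_univ_lt_top i)
    have h1 : |ff M x.1 - x.1| ≤ |ff M x.1| + |x.1| := by
      have := abs_add_le (ff M x.1) (-x.1)
      simpa [sub_eq_add_neg] using this
    have h2 := ff_bdd hM x.1
    have h3 := bound_fst hM (Finset.mem_range.mp hi) hx
    have h4 : |(|ff M x.1 - x.1|)| = |ff M x.1 - x.1| := abs_abs _
    linarith
  rw [QM_eq, integral_finset_sum_measure hint]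
  have hterm : ∀ i ∈ Finset.range M, ∫ x : ℝ × ℝ, |ff M x.1 - x.1| ∂((M : ENNReal) • nu M i)
      = (M : ℝ) * ((1 / M) * (1 / (4 * (M : ℝ) ^ 2))) := by
    intro i hi
    rw [integral_smul_measure, ENNReal.toReal_natCast, smul_eq_mul, nu,
      int_fst _ _ (f := fun u : ℝ => |ff M u - u|) hmeas.aestronglyMeasurable,
      Measure.restrict_apply_univ, vol_II_toReal, integral_absdiff_II hM (Finset.mem_range.mp hi)]
  rw [Finset.sum_congr rfl hterm, Finset.sum_const, Finset.card_range, nsmul_eq_mul]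
  field_simp

end Stmt16

theorem stmt16 (M : ℕ) (hM : 0 < M) :
    (QM M).map Prod.fst = (volume : Measure ℝ).restrict (Set.Icc 0 1) ∧
    (QM M).map Prod.snd = (volume : Measure ℝ).restrict (Set.Icc 0 1) ∧
    ((QM M)[fun x : ℝ × ℝ => x.2 | MeasurableSpace.comap Prod.fst inferInstance])
      =ᵐ[QM M] (fun x : ℝ × ℝ => ∑ i ∈ Finset.range M,
        Set.indicator (Set.Ico ((i : ℝ) / M) ((i + 1 : ℕ) / M))
          (fun _ => (2 * i + 1 : ℝ) / (2 * M)) x.1) ∧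
    (∫ x, |((QM M)[fun x : ℝ × ℝ => x.2 |
        MeasurableSpace.comap Prod.fst inferInstance]) x - x.1| ∂(QM M))
      = 1 / (4 * M) := by
  have hcond := (Stmt16.condexp_eq hM).symm
  refine ⟨Stmt16.map_fst_QM hM, Stmt16.map_snd_QM hM, hcond, ?_⟩
  rw [integral_congr_ae (hcond.mono fun x hx => by rw [hx])]
  exact Stmt16.final_integral hM
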